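/- Let r > 1, p ≥ r, λ > 0, and let q_λ be the inverse of I_λ(s) = s/λ + s^r. Then the map s ↦ q_λ(s)^p / s is increasing on (0,∞). -/
import Mathlib


open Real Set

noncomputable def Ilam (lam r : ℝ) (s : ℝ) : ℝ := s / lam + s ^ r

def IsQ (lam r : ℝ) (q : ℝ → ℝ) : Prop :=
  Set.InvOn q (Ilam lam r) (Set.Ici 0) (Set.Ici 0) ∧
    Set.MapsTo q (Set.Ici 0) (Set.Ici 0)

lemma aux_key (r p lam : ℝ) (hr : 1 < r) (hpr : r ≤ p) (hlam : 0 < lam)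
    {a b : ℝ} (ha : 0 < a) (hab : a ≤ b) :
    a ^ p / (a / lam + a ^ r) ≤ b ^ p / (b / lam + b ^ r) := by
  have hb : 0 < b := ha.trans_le hab
  have har : (0:ℝ) < a ^ r := Real.rpow_pos_of_pos ha r
  have hbr : (0:ℝ) < b ^ r := Real.rpow_pos_of_pos hb r
  rw [div_le_div_iff₀ (by positivity) (by positivity)]
  have h1 : a ^ p * b ≤ b ^ p * a := by
    have h := Real.rpow_le_rpow ha.le hab (show (0:ℝ) ≤ p - 1 by linarith)
    have ea : a ^ (p-1) * a = a ^ p := by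
      rw [← Real.rpow_add_one ha.ne' (p-1)]; ring_nf
    have eb : b ^ (p-1) * b = b ^ p := by
      rw [← Real.rpow_add_one hb.ne' (p-1)]; ring_nf
    calc a ^ p * b = (a ^ (p-1) * b) * a := by rw [← ea]; ring
      _ ≤ (b ^ (p-1) * b) * a := by
          have : a ^ (p-1) * b ≤ b ^ (p-1) * b := by
            apply mul_le_mul_of_nonneg_right h hb.le
          exact mul_le_mul_of_nonneg_right this ha.le
      _ = b ^ p * a := by rw [eb]
  have h2 : a ^ p * b ^ r ≤ b ^ p * a ^ r := by
    have h := Real.rpow_le_rpow ha.le hab (show (0:ℝ) ≤ p - r by linarith)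
    have ea : a ^ (p-r) * a ^ r = a ^ p := by
      rw [← Real.rpow_add ha]; ring_nf
    have eb : b ^ (p-r) * b ^ r = b ^ p := by
      rw [← Real.rpow_add hb]; ring_nf
    calc a ^ p * b ^ r = a ^ (p-r) * (a ^ r * b ^ r) := by rw [← ea]; ring
      _ ≤ b ^ (p-r) * (a ^ r * b ^ r) := by
          exact mul_le_mul_of_nonneg_right h (by positivity)
      _ = b ^ p * a ^ r := by rw [← eb]; ring
  calc a ^ p * (b / lam + b ^ r) = (a ^ p * b) / lam + a ^ p * b ^ r := by ring
    _ ≤ (b ^ p * a) / lam + b ^ p * a ^ r := by gcongr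
    _ = b ^ p * (a / lam + a ^ r) := by ring

theorem stmt_7 (r p lam : ℝ) (hr : 1 < r) (hpr : r ≤ p) (hlam : 0 < lam)
    (q : ℝ → ℝ) (hq : IsQ lam r q) :
    MonotoneOn (fun s => q s ^ p / s) (Set.Ioi 0) := by
  have hImono : StrictMonoOn (Ilam lam r) (Set.Ici 0) := by
    intro x hx y hy hxy
    have h1 : x / lam < y / lam := by
      exact div_lt_div_of_pos_right hxy hlam
    have h2 : x ^ r ≤ y ^ r :=
      Real.rpow_le_rpow hx hxy.le (by linarith)
    exact add_lt_add_of_lt_of_le h1 h2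
  intro s hs t ht hst
  simp only [Set.mem_Ioi] at hs ht
  have hs' : s ∈ Set.Ici (0:ℝ) := le_of_lt hs
  have ht' : t ∈ Set.Ici (0:ℝ) := le_of_lt ht
  have hqs : q s ∈ Set.Ici (0:ℝ) := hq.2 hs'
  have hqt : q t ∈ Set.Ici (0:ℝ) := hq.2 ht'
  have hIs : Ilam lam r (q s) = s := hq.1.2 hs'
  have hIt : Ilam lam r (q t) = t := hq.1.2 ht'
  have hqs0 : 0 < q s := by
    rcases lt_or_eq_of_le (Set.mem_Ici.mp hqs) with h | h
    · exact h
    · exfalso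
      have : Ilam lam r (q s) = 0 := by
        rw [← h, Ilam]
        simp [Real.zero_rpow (by linarith : r ≠ 0)]
      rw [hIs] at this; linarith
  have hab : q s ≤ q t := by
    by_contra h
    push_neg at h
    have := hImono hqt hqs h
    rw [hIs, hIt] at this; linarith
  have key := aux_key r p lam hr hpr hlam hqs0 hab
  have key' : q s ^ p / Ilam lam r (q s) ≤ q t ^ p / Ilam lam r (q t) := by
    simpa [Ilam] using key
  rw [hIs, hIt] at key'
  exact key'
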